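/- For SITA-E thresholds over a continuous job size distribution with 0 = ξ_0 < ξ_1 < … < ξ_m = ∞ balancing load, the per-queue quantities λ_i E[1/X_i] are strictly decreasing in i: if X_i denotes the job size conditioned on (ξ_{i−1}, ξ_i], then λ_i E[1/X_i] > λ_{i+1} E[1/X_{i+1}], where λ_i = λP(X ∈ (ξ_{i−1}, ξ_i]). -/
import Mathlib

open intervalIntegral

/-- SITA-E monotonicity: if two consecutive size intervals `(a,b]` and `(b,c]` with
`0 < a < b < c` carry equal load, i.e. `∫ₐᵇ x f(x) dx = ∫ᵇᶜ x f(x) dx` for a positive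
continuous job-size density `f`, then `λᵢE[1/Xᵢ]` strictly decreases:
`∫ₐᵇ f(x)/x dx > ∫ᵇᶜ f(x)/x dx`. -/
theorem sita_e_inverse_moment_decreasing
    (f : ℝ → ℝ) (a b c : ℝ)
    (ha : 0 < a) (hab : a < b) (hbc : b < c)
    (hf : ContinuousOn f (Set.Icc a c))
    (hfpos : ∀ x ∈ Set.Icc a c, 0 < f x)
    (hload : ∫ x in a..b, x * f x = ∫ x in b..c, x * f x) :
    ∫ x in b..c, f x / x < ∫ x in a..b, f x / x := by
  have hb : (0:ℝ) < b := ha.trans hab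
  have hsub1 : Set.Icc a b ⊆ Set.Icc a c := Set.Icc_subset_Icc le_rfl hbc.le
  have hsub2 : Set.Icc b c ⊆ Set.Icc a c := Set.Icc_subset_Icc hab.le le_rfl
  have hxcont : ContinuousOn (fun x : ℝ => f x / x) (Set.Icc a c) := by
    apply hf.div (continuousOn_id)
    intro x hx
    exact ne_of_gt (lt_of_lt_of_le ha hx.1)
  have hgcont : ContinuousOn (fun x : ℝ => x * f x / b ^ 2) (Set.Icc a c) := by
    exact (continuousOn_id.mul hf).div_const _
  -- lower interval: x * f x / b^2 < f x / x
  have h1 : (∫ x in a..b, x * f x / b ^ 2) < ∫ x in a..b, f x / x := by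
    apply integral_lt_integral_of_continuousOn_of_le_of_exists_lt hab
      (hgcont.mono hsub1) (hxcont.mono hsub1)
    · intro x hx
      have hx1 : x ∈ Set.Icc a c := ⟨hx.1.le, hx.2.trans hbc.le⟩
      have hfx := hfpos x hx1
      have hxa : a < x := hx.1
      rw [div_le_div_iff₀ (by positivity) (by linarith)]
      nlinarith [mul_nonneg hfx.le (mul_nonneg (sub_nonneg.2 hx.2) (by linarith : (0:ℝ) ≤ b + x))]
    · refine ⟨a, Set.left_mem_Icc.2 hab.le, ?_⟩
      have hfa := hfpos a ⟨le_rfl, (hab.trans hbc).le⟩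
      rw [div_lt_div_iff₀ (by positivity) ha]
      nlinarith [mul_pos hfa (mul_pos (sub_pos.2 hab) (by linarith : (0:ℝ) < b + a))]
  -- upper interval: f x / x ≤ x * f x / b^2
  have h2 : (∫ x in b..c, f x / x) < ∫ x in b..c, x * f x / b ^ 2 := by
    apply integral_lt_integral_of_continuousOn_of_le_of_exists_lt hbc
      (hxcont.mono hsub2) (hgcont.mono hsub2)
    · intro x hx
      have hx1 : x ∈ Set.Icc a c := ⟨(hab.trans hx.1).le, hx.2⟩
      have hfx := hfpos x hx1
      have hxb : b < x := hx.1
      rw [div_le_div_iff₀ (by linarith) (by positivity)]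
      nlinarith [mul_nonneg hfx.le (mul_nonneg (sub_nonneg.2 hxb.le) (by linarith : (0:ℝ) ≤ x + b))]
    · refine ⟨c, Set.right_mem_Icc.2 hbc.le, ?_⟩
      have hfc := hfpos c ⟨(hab.trans hbc).le, le_rfl⟩
      rw [div_lt_div_iff₀ (by linarith) (by positivity)]
      nlinarith [mul_pos hfc (mul_pos (sub_pos.2 hbc) (by linarith : (0:ℝ) < c + b))]
  have e1 : (∫ x in a..b, x * f x / b ^ 2) = (∫ x in a..b, x * f x) / b ^ 2 :=
    integral_div _ _
  have e2 : (∫ x in b..c, x * f x / b ^ 2) = (∫ x in b..c, x * f x) / b ^ 2 :=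
    integral_div _ _
  rw [e1, hload, ← e2] at h1
  linarith
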